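/- arXiv:2011.03967 — 3 statements merged into one kernel-verified Lean document; each statement's English description precedes it below -/
import Mathlib

section
/- Let 1 < c < 427/400 be fixed, θ0 = 1/2 − (1/4)·e·log 2, ε = (log log X)^6/(log X)^{θ0} and Δ = X^{1/4−c}. For S(t) = Σ_{X/2 < p ≤ X} e(t p^c) log p (sum over primes p), one has ∫_{−Δ}^{Δ} |S(t)|² dt ≪ X^{2−c} (log X)³ for all sufficiently large X, with an implied constant depending only on c. -/
open MeasureTheory

/-- `e(t) = exp(2πit)`. -/
noncomputable def e (t : ℝ) : ℂ := Complex.exp (2 * Real.pi * Complex.I * t)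

/-- The primes `p` with `a < p ≤ b`. -/
noncomputable def primesIoc (a b : ℝ) : Finset ℕ :=
  (Finset.range (⌊b⌋₊ + 1)).filter fun p => p.Prime ∧ a < (p : ℝ) ∧ (p : ℝ) ≤ b

/-- `S(t) = Σ_{X/2 < p ≤ X} e(t p^c) log p`. -/
noncomputable def S (c X t : ℝ) : ℂ :=
  ∑ p ∈ primesIoc (X / 2) X, e (t * (p : ℝ) ^ c) * (Real.log p : ℂ)

-- symmetric lower bound on rpow gaps
lemma rpow_sub_lower {c a b : ℝ} (hc : 1 < c) (ha : 0 < a) (hab : a ≤ b) :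
    c * a ^ (c-1) * (b - a) ≤ b ^ c - a ^ c := by
  rcases eq_or_lt_of_le hab with rfl | h
  · simp
  have hd : ∀ x : ℝ, HasDerivAt (fun x => x ^ c) (c * x ^ (c-1)) x :=
    fun x => Real.hasDerivAt_rpow_const (Or.inr hc.le)
  obtain ⟨ξ, hξ, heq⟩ := exists_hasDerivAt_eq_slope (fun x => x ^ c) (fun x => c * x ^ (c-1)) h
    (fun x _ => (hd x).continuousAt.continuousWithinAt) (fun x _ => hd x)
  have h1 : a ^ (c-1) ≤ ξ ^ (c-1) := Real.rpow_le_rpow ha.le hξ.1.le (by linarith)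
  have h3 : c * a ^ (c-1) * (b - a) ≤ c * ξ ^ (c-1) * (b - a) := by
    apply mul_le_mul_of_nonneg_right
      (mul_le_mul_of_nonneg_left h1 (by linarith)) (by linarith)
  calc c * a ^ (c-1) * (b - a) ≤ c * ξ ^ (c-1) * (b - a) := h3
    _ = (b ^ c - a ^ c) / (b - a) * (b - a) := by rw [heq]
    _ = b ^ c - a ^ c := div_mul_cancel₀ _ (by linarith)

lemma gap_low {c h u v : ℝ} (hc : 1 < c) (h0 : 0 < h) (hu : h ≤ u) (hv : h ≤ v) :
    h ^ (c-1) * |u - v| ≤ |u ^ c - v ^ c| := by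
  have key : ∀ x y : ℝ, h ≤ x → h ≤ y → x ≤ y → h ^ (c-1) * |x - y| ≤ |x ^ c - y ^ c| := by
    intro x y hx hy hxy
    have hx0 : 0 < x := lt_of_lt_of_le h0 hx
    have hxc : x ^ c ≤ y ^ c := Real.rpow_le_rpow hx0.le hxy (by linarith)
    rw [abs_sub_comm, abs_of_nonneg (by linarith), abs_sub_comm, abs_of_nonneg (by linarith)]
    have h1 : c * x ^ (c-1) * (y - x) ≤ y ^ c - x ^ c := rpow_sub_lower hc hx0 hxy
    have h2 : h ^ (c-1) ≤ x ^ (c-1) := Real.rpow_le_rpow h0.le hx (by linarith)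
    have h4 : h ^ (c-1) * (y - x) ≤ c * x ^ (c-1) * (y - x) :=
      mul_le_mul_of_nonneg_right
        (h2.trans (le_mul_of_one_le_left (Real.rpow_nonneg hx0.le (c-1)) hc.le))
        (by linarith)
    linarith
  rcases le_total u v with huv | huv
  · exact key u v hu hv huv
  · rw [abs_sub_comm, abs_sub_comm (u^c)]; exact key v u hv hu huv

lemma cos_int_bound (k Δ : ℝ) (hk : k ≠ 0) :
    |∫ t in (-Δ)..Δ, Real.cos (k * t)| ≤ 2 / |k| := by
  rw [intervalIntegral.integral_comp_mul_left (fun x => Real.cos x) hk, integral_cos]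
  rw [smul_eq_mul, abs_mul, abs_inv]
  have hs : |Real.sin (k*Δ) - Real.sin (k*(-Δ))| ≤ 2 := by
    calc |Real.sin (k*Δ) - Real.sin (k*(-Δ))| ≤ |Real.sin (k*Δ)| + |Real.sin (k*(-Δ))| :=
          abs_sub _ _
      _ ≤ 1 + 1 := add_le_add (Real.abs_sin_le_one _) (Real.abs_sin_le_one _)
      _ = 2 := by norm_num
  calc |k|⁻¹ * |Real.sin (k*Δ) - Real.sin (k*(-Δ))| ≤ |k|⁻¹ * 2 := by
        gcongr
    _ = 2 / |k| := by rw [div_eq_mul_inv]; ring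

lemma pair_bound {c X : ℝ} (Δ : ℝ) (hc : 1 < c) (hX : 3 ≤ X) (hΔ : 0 ≤ Δ)
    {p q : ℕ} (hp : p ∈ primesIoc (X/2) X) (hq : q ∈ primesIoc (X/2) X) :
    Real.log p * Real.log q * ∫ t in (-Δ)..Δ, Real.cos (2*Real.pi*((p:ℝ)^c - (q:ℝ)^c) * t)
      ≤ Real.log X ^ 2 *
        (if p = q then 2*Δ else ((X/2)^(c-1) * |(p:ℝ) - (q:ℝ)|)⁻¹) := by
  obtain ⟨-, hp2, hp3, hp4⟩ := Finset.mem_filter.mp hp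
  obtain ⟨-, hq2, hq3, hq4⟩ := Finset.mem_filter.mp hq
  have hX2 : (0:ℝ) < X/2 := by linarith
  have hp0 : (0:ℝ) < p := lt_trans hX2 hp3
  have hq0 : (0:ℝ) < q := lt_trans hX2 hq3
  have hlp0 : 0 ≤ Real.log p := Real.log_natCast_nonneg p
  have hlq0 : 0 ≤ Real.log q := Real.log_natCast_nonneg q
  have hlpX : Real.log p ≤ Real.log X := Real.log_le_log hp0 hp4
  have hlqX : Real.log q ≤ Real.log X := Real.log_le_log hq0 hq4
  by_cases hpq : p = q
  · subst hpq
    rw [if_pos rfl]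
    have : ∀ t : ℝ, Real.cos (2*Real.pi*((p:ℝ)^c - (p:ℝ)^c) * t) = 1 := by
      intro t; rw [sub_self]; norm_num
    simp only [this, intervalIntegral.integral_const, smul_eq_mul, mul_one,
      sub_neg_eq_add]
    have h1 : Real.log p * Real.log p ≤ Real.log X ^ 2 := by nlinarith
    nlinarith
  · rw [if_neg hpq]
    set d : ℝ := (p:ℝ)^c - (q:ℝ)^c with hd
    set m : ℝ := (X/2)^(c-1) * |(p:ℝ) - (q:ℝ)| with hm
    have habs : (0:ℝ) < |(p:ℝ) - (q:ℝ)| := by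
      rw [abs_pos, sub_ne_zero]
      exact_mod_cast fun h => hpq (Nat.cast_injective h)
    have hrp : (0:ℝ) < (X/2)^(c-1) := Real.rpow_pos_of_pos hX2 _
    have hm0 : 0 < m := mul_pos hrp habs
    have hlow : m ≤ |d| := gap_low hc hX2 hp3.le hq3.le
    have hdne : d ≠ 0 := by
      intro h0
      rw [h0, abs_zero] at hlow
      linarith
    have hk : 2*Real.pi*d ≠ 0 :=
      mul_ne_zero (by positivity) hdne
    have hbound := cos_int_bound (2*Real.pi*d) Δ hk
    have hkabs : |2*Real.pi*d| = 2*Real.pi*|d| := by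
      rw [abs_mul, abs_of_pos (by positivity : (0:ℝ) < 2*Real.pi)]
    have hπ : (1:ℝ) ≤ Real.pi := by linarith [Real.pi_gt_three]
    have h2m : 2 * m ≤ |2*Real.pi*d| := by
      rw [hkabs]
      nlinarith [abs_nonneg d]
    have hI : (∫ t in (-Δ)..Δ, Real.cos (2*Real.pi*d * t)) ≤ m⁻¹ := by
      calc (∫ t in (-Δ)..Δ, Real.cos (2*Real.pi*d * t))
          ≤ |∫ t in (-Δ)..Δ, Real.cos (2*Real.pi*d * t)| := le_abs_self _
        _ ≤ 2 / |2*Real.pi*d| := hbound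
        _ ≤ 2 / (2*m) := by
            apply div_le_div_of_nonneg_left (by norm_num) (by linarith) h2m
        _ = m⁻¹ := by field_simp
    calc Real.log p * Real.log q * ∫ t in (-Δ)..Δ, Real.cos (2*Real.pi*d * t)
        ≤ Real.log p * Real.log q * m⁻¹ := by
          apply mul_le_mul_of_nonneg_left hI (mul_nonneg hlp0 hlq0)
      _ ≤ Real.log X ^ 2 * m⁻¹ := by
          have : Real.log p * Real.log q ≤ Real.log X ^ 2 := by nlinarith
          apply mul_le_mul_of_nonneg_right this (by positivity)

lemma harmonic_real_le (N : ℕ) :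
    ∑ j ∈ Finset.range N, ((j:ℝ)+1)⁻¹ ≤ 1 + Real.log N := by
  have h := harmonic_le_one_add_log N
  rw [harmonic] at h
  push_cast at h
  convert h using 2

lemma sum_inv_gap_le (p N : ℕ) (hp : p ≤ N) :
    ∑ q ∈ (Finset.range (N+1)).erase p, (|(p:ℝ) - q|)⁻¹ ≤ 2 * (1 + Real.log N) := by
  set H : ℝ := ∑ j ∈ Finset.range N, ((j:ℝ)+1)⁻¹ with hHdef
  have hsplit : (Finset.range (N+1)).erase p = Finset.range p ∪ Finset.Ioc p N := by
    ext q
    simp only [Finset.mem_erase, Finset.mem_range, Finset.mem_union, Finset.mem_Ioc]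
    omega
  have hdisj : Disjoint (Finset.range p) (Finset.Ioc p N) := by
    rw [Finset.disjoint_left]
    intro q hq hq'
    simp only [Finset.mem_range] at hq
    simp only [Finset.mem_Ioc] at hq'
    omega
  rw [hsplit, Finset.sum_union hdisj]
  have h1 : ∑ q ∈ Finset.range p, (|(p:ℝ) - q|)⁻¹ ≤ H := by
    have hre := Finset.sum_range_reflect (fun q => (|(p:ℝ) - q|)⁻¹) p
    rw [← hre]
    have heq : ∀ j ∈ Finset.range p, (|(p:ℝ) - ((p - 1 - j : ℕ):ℝ)|)⁻¹ = ((j:ℝ)+1)⁻¹ := by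
      intro j hj
      rw [Finset.mem_range] at hj
      have : ((p - 1 - j : ℕ):ℝ) = (p:ℝ) - 1 - j := by
        have : p - 1 - j = p - (1 + j) := by omega
        rw [this, Nat.cast_sub (by omega)]
        push_cast; ring
      rw [this]
      rw [show (p:ℝ) - ((p:ℝ) - 1 - j) = (j:ℝ) + 1 by ring, abs_of_pos (by positivity)]
    rw [Finset.sum_congr rfl heq]
    apply Finset.sum_le_sum_of_subset_of_nonneg
    · exact Finset.range_subset_range.mpr hp
    · intro i _ _; positivity
  have h2 : ∑ q ∈ Finset.Ioc p N, (|(p:ℝ) - q|)⁻¹ ≤ H := by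
    have : Finset.Ioc p N = Finset.Ico (p+1) (N+1) := by ext q; simp [Nat.lt_succ_iff]
    rw [this, Finset.sum_Ico_eq_sum_range]
    have heq : ∀ k ∈ Finset.range (N + 1 - (p + 1)), (|(p:ℝ) - ((p + 1 + k : ℕ):ℝ)|)⁻¹
        = ((k:ℝ)+1)⁻¹ := by
      intro k _
      push_cast
      rw [show (p:ℝ) - ((p:ℝ) + 1 + k) = -((k:ℝ)+1) by ring, abs_neg,
        abs_of_pos (by positivity)]
    rw [Finset.sum_congr rfl heq]
    apply Finset.sum_le_sum_of_subset_of_nonneg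
    · exact Finset.range_subset_range.mpr (by omega)
    · intro i _ _; positivity
  have := harmonic_real_le N
  linarith

lemma e_mul_conj (x y : ℝ) : e x * (starRingEnd ℂ) (e y) = e (x - y) := by
  rw [e, e, e, ← Complex.exp_conj, ← Complex.exp_add]
  congr 1
  simp only [map_mul, Complex.conj_I, Complex.conj_ofReal, map_ofNat]
  push_cast; ring

lemma e_re (x : ℝ) : (e x).re = Real.cos (2 * Real.pi * x) := by
  have h : (2 * Real.pi * Complex.I * (x:ℂ)) = ((2*Real.pi*x : ℝ) : ℂ) * Complex.I := by
    push_cast; ring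
  rw [e, h, Complex.exp_ofReal_mul_I_re]

lemma S_norm_sq (c X t : ℝ) :
    ‖S c X t‖^2 = ∑ p ∈ primesIoc (X/2) X, ∑ q ∈ primesIoc (X/2) X,
      (Real.log p * Real.log q) * Real.cos (2*Real.pi*((p:ℝ)^c - (q:ℝ)^c) * t) := by
  have h0 : ‖S c X t‖^2 = (S c X t * (starRingEnd ℂ) (S c X t)).re := by
    rw [Complex.mul_conj]
    rw [Complex.ofReal_re, ← Complex.sq_norm]
  rw [h0]
  rw [show S c X t = ∑ p ∈ primesIoc (X/2) X, e (t * (p : ℝ) ^ c) * (Real.log p : ℂ) from rfl]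
  rw [map_sum, Finset.sum_mul_sum, Complex.re_sum]
  refine Finset.sum_congr rfl fun p _ => ?_
  rw [Complex.re_sum]
  refine Finset.sum_congr rfl fun q _ => ?_
  have : e (t * (p:ℝ)^c) * (Real.log p : ℂ) * ((starRingEnd ℂ) (e (t * (q:ℝ)^c) * (Real.log q : ℂ)))
      = ((Real.log p * Real.log q : ℝ) : ℂ) * e (t * (p:ℝ)^c - t * (q:ℝ)^c) := by
    rw [map_mul, Complex.conj_ofReal, ← e_mul_conj]
    push_cast; ring
  rw [this, Complex.re_ofReal_mul, e_re]
  congr 2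
  ring

lemma integral_S_eq (c X Δ : ℝ) :
    ∫ t in (-Δ)..Δ, ‖S c X t‖^2 = ∑ p ∈ primesIoc (X/2) X, ∑ q ∈ primesIoc (X/2) X,
      (Real.log p * Real.log q) *
        ∫ t in (-Δ)..Δ, Real.cos (2*Real.pi*((p:ℝ)^c - (q:ℝ)^c) * t) := by
  simp_rw [S_norm_sq]
  rw [intervalIntegral.integral_finset_sum]
  · refine Finset.sum_congr rfl fun p _ => ?_
    rw [intervalIntegral.integral_finset_sum]
    · exact Finset.sum_congr rfl fun q _ => intervalIntegral.integral_const_mul _ _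
    · intro q _
      exact ((continuous_const.mul ((Real.continuous_cos).comp
        (continuous_const.mul continuous_id)))).intervalIntegrable _ _
  · intro p _
    apply Continuous.intervalIntegrable
    continuity

/-- For fixed `1 < c < 427/400` and `Δ = X^(1/4−c)`,
`∫_{−Δ}^{Δ} |S(t)|² dt ≪ X^(2−c) (log X)³` for all sufficiently large `X`. -/
theorem stmt_3 (c : ℝ) (hc1 : 1 < c) (hc2 : c < 427 / 400) :
    ∃ C : ℝ, 0 < C ∧ ∃ X0 : ℝ, ∀ X : ℝ, X0 ≤ X →
      (∫ t in (-(X ^ (1 / 4 - c)))..(X ^ (1 / 4 - c)), ‖S c X t‖ ^ 2)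
        ≤ C * X ^ (2 - c) * Real.log X ^ 3 := by
  refine ⟨20, by norm_num, 3, fun X hX => ?_⟩
  have hX0 : (0:ℝ) < X := by linarith
  have hX1 : (1:ℝ) ≤ X := by linarith
  set Δ : ℝ := X ^ (1 / 4 - c) with hΔdef
  set P : Finset ℕ := primesIoc (X/2) X with hPdef
  set N : ℕ := ⌊X⌋₊ with hNdef
  set L : ℝ := Real.log X with hLdef
  have hL : 1 ≤ L := by
    rw [hLdef, Real.le_log_iff_exp_le hX0]
    exact (Real.exp_one_lt_d9.le.trans (by norm_num)).trans hX
  have hΔ0 : 0 ≤ Δ := (Real.rpow_pos_of_pos hX0 _).le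
  have hNX : (N:ℝ) ≤ X := Nat.floor_le hX0.le
  have hN3 : 3 ≤ N := Nat.le_floor (by exact_mod_cast hX)
  have hPsub : P ⊆ Finset.range (N+1) := Finset.filter_subset _ _
  -- rewrite the integral
  rw [integral_S_eq, ← hPdef]
  have step1 : ∑ p ∈ P, ∑ q ∈ P, (Real.log p * Real.log q) *
        ∫ t in (-Δ)..Δ, Real.cos (2*Real.pi*((p:ℝ)^c - (q:ℝ)^c) * t)
      ≤ ∑ p ∈ P, ∑ q ∈ P, L^2 *
        (if p = q then 2*Δ else ((X/2)^(c-1) * |(p:ℝ) - (q:ℝ)|)⁻¹) :=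
    Finset.sum_le_sum fun p hp => Finset.sum_le_sum fun q hq =>
      pair_bound Δ hc1 hX hΔ0 hp hq
  have hinvp : (0:ℝ) < (X/2)^(c-1) := Real.rpow_pos_of_pos (by linarith) _
  have step2 : ∀ p ∈ P, ∑ q ∈ P,
        (if p = q then 2*Δ else ((X/2)^(c-1) * |(p:ℝ) - (q:ℝ)|)⁻¹)
      ≤ 2*Δ + ((X/2)^(c-1))⁻¹ * (2*(1+L)) := by
    intro p hp
    have hpN : p ≤ N := Nat.lt_succ_iff.mp (Finset.mem_range.mp (hPsub hp))
    have hE : ∑ q ∈ P.erase p,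
          (if p = q then 2*Δ else ((X/2)^(c-1) * |(p:ℝ) - (q:ℝ)|)⁻¹)
        ≤ ((X/2)^(c-1))⁻¹ * (2*(1+L)) := by
      have herase : ∑ q ∈ P.erase p,
          (if p = q then 2*Δ else ((X/2)^(c-1) * |(p:ℝ) - (q:ℝ)|)⁻¹)
        = ∑ q ∈ P.erase p, ((X/2)^(c-1) * |(p:ℝ) - (q:ℝ)|)⁻¹ := by
        refine Finset.sum_congr rfl fun q hq => ?_
        rw [if_neg (Ne.symm (Finset.mem_erase.mp hq).1)]
      rw [herase]
      have hsplit : ∑ q ∈ P.erase p, ((X/2)^(c-1) * |(p:ℝ) - (q:ℝ)|)⁻¹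
          = ((X/2)^(c-1))⁻¹ * ∑ q ∈ P.erase p, (|(p:ℝ) - (q:ℝ)|)⁻¹ := by
        rw [Finset.mul_sum]
        exact Finset.sum_congr rfl fun q _ => by rw [mul_inv]
      rw [hsplit]
      have hsub2 : P.erase p ⊆ (Finset.range (N+1)).erase p :=
        Finset.erase_subset_erase _ hPsub
      have h1 : ∑ q ∈ P.erase p, (|(p:ℝ) - (q:ℝ)|)⁻¹
          ≤ ∑ q ∈ (Finset.range (N+1)).erase p, (|(p:ℝ) - (q:ℝ)|)⁻¹ :=
        Finset.sum_le_sum_of_subset_of_nonneg hsub2 (fun i _ _ => by positivity)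
      have h2 := sum_inv_gap_le p N hpN
      have h3 : Real.log N ≤ L := Real.log_le_log (by positivity) hNX
      have h4 : ∑ q ∈ P.erase p, (|(p:ℝ) - (q:ℝ)|)⁻¹ ≤ 2*(1+L) := by
        refine (h1.trans h2).trans ?_
        nlinarith
      exact mul_le_mul_of_nonneg_left h4 (by positivity)
    calc ∑ q ∈ P, (if p = q then 2*Δ else ((X/2)^(c-1) * |(p:ℝ) - (q:ℝ)|)⁻¹)
        = (if p = p then 2*Δ else ((X/2)^(c-1) * |(p:ℝ) - (p:ℝ)|)⁻¹)
            + ∑ q ∈ P.erase p,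
              (if p = q then 2*Δ else ((X/2)^(c-1) * |(p:ℝ) - (q:ℝ)|)⁻¹) :=
          (Finset.add_sum_erase P _ hp).symm
      _ = 2*Δ + ∑ q ∈ P.erase p,
              (if p = q then 2*Δ else ((X/2)^(c-1) * |(p:ℝ) - (q:ℝ)|)⁻¹) := by
          rw [if_pos rfl]
      _ ≤ 2*Δ + ((X/2)^(c-1))⁻¹ * (2*(1+L)) := by linarith [hE]
  -- combine
  have hB0 : (0:ℝ) ≤ 2*Δ + ((X/2)^(c-1))⁻¹ * (2*(1+L)) := by positivity
  have step3 : ∑ p ∈ P, ∑ q ∈ P, L^2 *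
        (if p = q then 2*Δ else ((X/2)^(c-1) * |(p:ℝ) - (q:ℝ)|)⁻¹)
      ≤ L^2 * ((P.card : ℝ) * (2*Δ + ((X/2)^(c-1))⁻¹ * (2*(1+L)))) := by
    have : ∀ p ∈ P, ∑ q ∈ P, L^2 *
          (if p = q then 2*Δ else ((X/2)^(c-1) * |(p:ℝ) - (q:ℝ)|)⁻¹)
        ≤ L^2 * (2*Δ + ((X/2)^(c-1))⁻¹ * (2*(1+L))) := by
      intro p hp
      rw [← Finset.mul_sum]
      exact mul_le_mul_of_nonneg_left (step2 p hp) (by positivity)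
    calc ∑ p ∈ P, ∑ q ∈ P, L^2 *
          (if p = q then 2*Δ else ((X/2)^(c-1) * |(p:ℝ) - (q:ℝ)|)⁻¹)
        ≤ ∑ _p ∈ P, L^2 * (2*Δ + ((X/2)^(c-1))⁻¹ * (2*(1+L))) :=
          Finset.sum_le_sum this
      _ = (P.card : ℝ) * (L^2 * (2*Δ + ((X/2)^(c-1))⁻¹ * (2*(1+L)))) := by
          rw [Finset.sum_const, nsmul_eq_mul]
      _ = L^2 * ((P.card : ℝ) * (2*Δ + ((X/2)^(c-1))⁻¹ * (2*(1+L)))) := by ring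
  -- numeric bounds
  have hcard : (P.card : ℝ) ≤ 2 * X := by
    have := Finset.card_le_card hPsub
    rw [Finset.card_range] at this
    have : (P.card : ℝ) ≤ (N:ℝ) + 1 := by exact_mod_cast this
    linarith
  have hDpos : (0:ℝ) < X ^ ((1:ℝ)-c) := Real.rpow_pos_of_pos hX0 _
  have hDle : Δ ≤ X ^ ((1:ℝ)-c) :=
    Real.rpow_le_rpow_of_exponent_le hX1 (by norm_num)
  have hinv : ((X/2)^(c-1))⁻¹ ≤ 2 * X ^ ((1:ℝ)-c) := by
    have hxc : (0:ℝ) < X ^ (c-1) := Real.rpow_pos_of_pos hX0 _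
    have h2c : (2:ℝ) ^ (c-1) ≤ 2 := by
      calc (2:ℝ) ^ (c-1) ≤ (2:ℝ) ^ (1:ℝ) :=
            Real.rpow_le_rpow_of_exponent_le one_le_two (by linarith)
        _ = 2 := Real.rpow_one 2
    have h1 : X ^ (c-1) / 2 ≤ (X/2) ^ (c-1) := by
      rw [Real.div_rpow hX0.le (by norm_num)]
      gcongr
    have h2 : ((X/2)^(c-1))⁻¹ ≤ (X ^ (c-1) / 2)⁻¹ :=
      inv_anti₀ (by positivity) h1
    have h3 : (X ^ (c-1) / 2)⁻¹ = 2 * (X ^ (c-1))⁻¹ := by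
      field_simp
    have h4 : (X ^ (c-1))⁻¹ = X ^ ((1:ℝ)-c) := by
      rw [show (1:ℝ)-c = -(c-1) by ring, Real.rpow_neg hX0.le]
    rw [h3, h4] at h2
    exact h2
  have hXD : X * X ^ ((1:ℝ)-c) = X ^ (2-c) := by
    rw [show (2:ℝ)-c = 1 + (1-c) by ring, Real.rpow_add hX0, Real.rpow_one]
  have hB : 2*Δ + ((X/2)^(c-1))⁻¹ * (2*(1+L)) ≤ 10 * X ^ ((1:ℝ)-c) * L := by
    have hbig : ((X/2)^(c-1))⁻¹ * (2*(1+L)) ≤ (2 * X ^ ((1:ℝ)-c)) * (4*L) := by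
      apply mul_le_mul hinv (by linarith) (by positivity) (by positivity)
    nlinarith [hDpos.le]
  have final : L^2 * ((P.card : ℝ) * (2*Δ + ((X/2)^(c-1))⁻¹ * (2*(1+L))))
      ≤ 20 * X ^ (2-c) * L^3 := by
    calc L^2 * ((P.card : ℝ) * (2*Δ + ((X/2)^(c-1))⁻¹ * (2*(1+L))))
        ≤ L^2 * ((2*X) * (10 * X ^ ((1:ℝ)-c) * L)) := by
          refine mul_le_mul_of_nonneg_left ?_ (by positivity)
          exact mul_le_mul hcard hB hB0 (by positivity)
      _ = 20 * (X * X ^ ((1:ℝ)-c)) * L^3 := by ring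
      _ = 20 * X ^ (2-c) * L^3 := by rw [hXD]
  exact (step1.trans step3).trans final
end

section
/- Let 1 < c < 427/400 be fixed and Δ = X^{1/4−c}. For I(t) = ∫_{X/2}^{X} e(t y^c) dy, one has ∫_{−Δ}^{Δ} |I(t)|² dt ≪ X^{2−c} log X for all sufficiently large X, with an implied constant depending only on c. -/
open MeasureTheory

/-- `I(t) = ∫_{X/2}^{X} e(t y^c) dy`. -/
noncomputable def I (c X t : ℝ) : ℂ := ∫ y in (X / 2)..X, e (t * y ^ c)

lemma norm_e (x : ℝ) : ‖e x‖ = 1 := by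
  have h : (2 * (Real.pi:ℂ) * Complex.I * x) = ((2 * Real.pi * x : ℝ) : ℂ) * Complex.I := by
    push_cast; ring
  rw [e, h, Complex.norm_exp_ofReal_mul_I]

lemma decay (c : ℝ) (hc1 : 1 < c) {a b t : ℝ} (ha : 0 < a) (hab : a ≤ b) (ht : t ≠ 0) :
    ‖∫ y in a..b, e (t * y ^ c)‖ ≤ 3 * a ^ (1 - c) / (2 * Real.pi * |t| * c) := by
  have hc0 : 0 < c := lt_trans one_pos hc1
  have hr : (2 * Real.pi * t * c : ℝ) ≠ 0 := by
    have := Real.pi_pos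
    positivity
  set κ : ℂ := ((2 * Real.pi * t * c : ℝ) : ℂ) * Complex.I with hκdef
  have hκ : κ ≠ 0 := mul_ne_zero (by exact_mod_cast hr) Complex.I_ne_zero
  have hκnorm : ‖κ‖ = 2 * Real.pi * |t| * c := by
    rw [hκdef, norm_mul, Complex.norm_I, Complex.norm_real, mul_one, Real.norm_eq_abs]
    rw [abs_mul, abs_mul, abs_mul]
    rw [abs_of_pos Real.pi_pos, abs_of_pos hc0, abs_of_nonneg (by norm_num : (0:ℝ) ≤ 2)]
  have hκn : 0 < 2 * Real.pi * |t| * c := by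
    have := Real.pi_pos
    have : 0 < |t| := abs_pos.mpr ht
    positivity
  set u : ℝ → ℂ := fun y => κ⁻¹ * ((y ^ (1 - c) : ℝ) : ℂ) with hu_def
  set u' : ℝ → ℂ := fun y => κ⁻¹ * (((1 - c) * y ^ (-c) : ℝ) : ℂ) with hu'_def
  set v : ℝ → ℂ := fun y => e (t * y ^ c) with hv_def
  set v' : ℝ → ℂ := fun y => e (t * y ^ c) * (2 * (Real.pi:ℂ) * Complex.I * ((t * (c * y ^ (c - 1)) : ℝ) : ℂ)) with hv'_def
  have hpos : ∀ y ∈ Set.uIcc a b, 0 < y := by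
    intro y hy
    rw [Set.uIcc_of_le hab] at hy
    exact lt_of_lt_of_le ha hy.1
  have hu : ∀ y ∈ Set.uIcc a b, HasDerivAt u (u' y) y := by
    intro y hy
    have h1 : HasDerivAt (fun y : ℝ => y ^ (1 - c)) ((1 - c) * y ^ (1 - c - 1)) y :=
      Real.hasDerivAt_rpow_const (Or.inl (hpos y hy).ne')
    have h2 := (h1.ofReal_comp).const_mul κ⁻¹
    rw [show (1 - c - 1 : ℝ) = -c by ring] at h2
    exact h2
  have hv : ∀ y ∈ Set.uIcc a b, HasDerivAt v (v' y) y := by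
    intro y hy
    have h1 : HasDerivAt (fun y : ℝ => t * y ^ c) (t * (c * y ^ (c - 1))) y :=
      (Real.hasDerivAt_rpow_const (Or.inl (hpos y hy).ne')).const_mul t
    have h2 := ((h1.ofReal_comp).const_mul (2 * (Real.pi:ℂ) * Complex.I)).cexp
    convert h2 using 1
    all_goals rfl
  have hvcont : Continuous v := by
    simp only [hv_def, e]
    exact Complex.continuous_exp.comp (continuous_const.mul (Complex.continuous_ofReal.comp
      (continuous_const.mul (Real.continuous_rpow_const hc0.le))))
  have hu'int : IntervalIntegrable u' volume a b := by
    apply ContinuousOn.intervalIntegrable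
    apply ContinuousOn.mul continuousOn_const
    apply Complex.continuous_ofReal.comp_continuousOn
    apply ContinuousOn.mul continuousOn_const
    intro y hy
    exact (Real.continuousAt_rpow_const y (-c) (Or.inl (hpos y hy).ne')).continuousWithinAt
  have hv'int : IntervalIntegrable v' volume a b := by
    apply Continuous.intervalIntegrable
    apply hvcont.mul
    apply continuous_const.mul
    apply Complex.continuous_ofReal.comp
    exact continuous_const.mul (continuous_const.mul (Real.continuous_rpow_const (by linarith)))
  have key : Set.EqOn (fun y => e (t * y ^ c)) (fun y => u y * v' y) (Set.uIcc a b) := by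
    intro y hy
    show e (t * y ^ c) = u y * v' y
    have hy0 := hpos y hy
    have hy1 : ((y ^ (1 - c) : ℝ) : ℂ) * ((y ^ (c - 1) : ℝ) : ℂ) = 1 := by
      rw [← Complex.ofReal_mul, ← Real.rpow_add hy0]
      norm_num
    have hrw : u y * v' y = e (t * y ^ c) * ((κ⁻¹ * κ) * (((y ^ (1 - c) : ℝ) : ℂ) * ((y ^ (c - 1) : ℝ) : ℂ))) := by
      simp only [hu_def, hv'_def, hκdef]
      push_cast
      ring
    rw [hrw, inv_mul_cancel₀ hκ, one_mul, hy1, mul_one]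
  rw [intervalIntegral.integral_congr key]
  have H := intervalIntegral.integral_mul_deriv_eq_deriv_mul hu hv hu'int hv'int
  rw [H]
  have hnu : ∀ y : ℝ, 0 < y → ‖u y‖ = y ^ (1 - c) / (2 * Real.pi * |t| * c) := by
    intro y hy
    rw [hu_def]
    simp only [norm_mul, norm_inv, hκnorm, Complex.norm_real, Real.norm_eq_abs,
      abs_of_nonneg (Real.rpow_nonneg hy.le _)]
    ring
  have hb0 : 0 < b := lt_of_lt_of_le ha hab
  have hnv : ∀ y : ℝ, ‖v y‖ = 1 := fun y => norm_e _
  have bound2 : ‖∫ y in a..b, u' y * v y‖ ≤ a ^ (1 - c) / (2 * Real.pi * |t| * c) := by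
    have hptw : ∀ᵐ s ∂(volume.restrict (Set.uIoc a b)),
        ‖u' s * v s‖ ≤ (c - 1) / (2 * Real.pi * |t| * c) * s ^ (-c) := by
      refine (ae_restrict_iff' measurableSet_uIoc).mpr (Filter.Eventually.of_forall ?_)
      intro s hs
      have hs0 : 0 < s := lt_of_lt_of_le ha ((Set.uIoc_of_le hab ▸ hs).1.le)
      rw [norm_mul, hnv, mul_one, hu'_def]
      simp only [norm_mul, norm_inv, hκnorm, Complex.norm_real, Real.norm_eq_abs]
      have h1 : |1 - c| = c - 1 := by rw [abs_of_nonpos (by linarith)]; ring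
      have h2 : |s ^ (-c)| = s ^ (-c) := abs_of_nonneg (Real.rpow_nonneg hs0.le _)
      rw [h1, h2]
      apply le_of_eq
      ring
    have hgint : IntervalIntegrable (fun s : ℝ => (c - 1) / (2 * Real.pi * |t| * c) * s ^ (-c)) volume a b := by
      apply ContinuousOn.intervalIntegrable
      apply ContinuousOn.mul continuousOn_const
      intro y hy
      exact (Real.continuousAt_rpow_const y (-c) (Or.inl (hpos y hy).ne')).continuousWithinAt
    refine (intervalIntegral.norm_integral_le_abs_of_norm_le hptw hgint).trans ?_
    have hb0 : 0 < b := lt_of_lt_of_le ha hab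
    have hval : (∫ s in a..b, s ^ (-c)) = (b ^ (-c+1) - a ^ (-c+1)) / (-c+1) :=
      integral_rpow (Or.inr ⟨fun h => absurd (neg_inj.mp h) (by linarith),
        Set.notMem_uIcc_of_lt ha hb0⟩)
    have hble : b ^ (1-c) ≤ a ^ (1-c) := Real.rpow_le_rpow_of_nonpos ha hab (by linarith)
    have hbnn : (0:ℝ) ≤ b ^ (1-c) := Real.rpow_nonneg hb0.le _
    have heq : (c - 1) / (2 * Real.pi * |t| * c) * ((b ^ (-c+1) - a ^ (-c+1)) / (-c+1))
        = (a ^ (1-c) - b ^ (1-c)) / (2 * Real.pi * |t| * c) := by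
      have h1 : (1 - c : ℝ) ≠ 0 := sub_ne_zero.mpr (by linarith)
      rw [show (-c+1 : ℝ) = 1-c by ring]
      field_simp [h1, Real.pi_ne_zero, abs_ne_zero.mpr ht, hc0.ne']
      ring
    rw [intervalIntegral.integral_const_mul, hval, heq,
      abs_of_nonneg (div_nonneg (sub_nonneg.mpr hble) hκn.le)]
    gcongr ?_ / _
    linarith
  calc ‖u b * v b - u a * v a - ∫ x in a..b, u' x * v x‖
      ≤ ‖u b * v b - u a * v a‖ + ‖∫ x in a..b, u' x * v x‖ := norm_sub_le _ _
    _ ≤ (‖u b * v b‖ + ‖u a * v a‖) + ‖∫ x in a..b, u' x * v x‖ := by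
        gcongr; exact norm_sub_le _ _
    _ ≤ (a ^ (1 - c) / (2 * Real.pi * |t| * c) + a ^ (1 - c) / (2 * Real.pi * |t| * c))
        + a ^ (1 - c) / (2 * Real.pi * |t| * c) := by
        have h1 : ‖u b * v b‖ ≤ a ^ (1 - c) / (2 * Real.pi * |t| * c) := by
          rw [norm_mul, hnv, mul_one, hnu b hb0]
          gcongr ?_ / _
          exact Real.rpow_le_rpow_of_nonpos ha hab (by linarith)
        have h2 : ‖u a * v a‖ ≤ a ^ (1 - c) / (2 * Real.pi * |t| * c) := by
          rw [norm_mul, hnv, mul_one, hnu a ha]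
        exact add_le_add (add_le_add h1 h2) bound2
    _ = 3 * a ^ (1 - c) / (2 * Real.pi * |t| * c) := by ring

lemma integral_inv_sq' {p q : ℝ} (h : (0:ℝ) ∉ Set.uIcc p q) :
    ∫ t in p..q, (t^2)⁻¹ = p⁻¹ - q⁻¹ := by
  have hder : ∀ x ∈ Set.uIcc p q, HasDerivAt (fun y : ℝ => -y⁻¹) ((x^2)⁻¹) x := by
    intro x hx
    have hx0 : x ≠ 0 := fun h' => h (h' ▸ hx)
    exact (hasDerivAt_inv hx0).neg.congr_deriv (neg_neg _)
  have hint : IntervalIntegrable (fun t : ℝ => (t^2)⁻¹) volume p q := by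
    apply ContinuousOn.intervalIntegrable
    apply ContinuousOn.inv₀ (continuous_pow 2).continuousOn
    intro x hx
    exact pow_ne_zero _ (fun h' => h (h' ▸ hx))
  rw [intervalIntegral.integral_eq_sub_of_hasDerivAt hder hint]
  ring

lemma I_continuous (c X : ℝ) (hc : 0 ≤ c) : Continuous fun t => I c X t := by
  have hf : Continuous (Function.uncurry fun (t y : ℝ) => e (t * y ^ c)) := by
    simp only [Function.uncurry, e]
    apply Complex.continuous_exp.comp
    apply continuous_const.mul
    apply Complex.continuous_ofReal.comp
    exact continuous_fst.mul ((Real.continuous_rpow_const hc).comp continuous_snd)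
  exact intervalIntegral.continuous_parametric_intervalIntegral_of_continuous' hf _ _


/-- For fixed `1 < c < 427/400` and `Δ = X^(1/4−c)`,
`∫_{−Δ}^{Δ} |I(t)|² dt ≪ X^(2−c) log X` for all sufficiently large `X`. -/
theorem stmt_4 (c : ℝ) (hc1 : 1 < c) (hc2 : c < 427 / 400) :
    ∃ C : ℝ, 0 < C ∧ ∃ X0 : ℝ, ∀ X : ℝ, X0 ≤ X →
      (∫ t in (-(X ^ (1 / 4 - c)))..(X ^ (1 / 4 - c)), ‖I c X t‖ ^ 2)
        ≤ C * X ^ (2 - c) * Real.log X := by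
  have hc0 : 0 < c := lt_trans one_pos hc1
  have hπ := Real.pi_pos
  set K : ℝ := 3 * 2 ^ (c - 1) / (2 * Real.pi * c) with hK
  have hK2 : (0:ℝ) < 2 ^ (c-1) := Real.rpow_pos_of_pos two_pos _
  have hKpos : 0 < K := by positivity
  refine ⟨1/2 + 2 * K^2, by positivity, 3, fun X hX => ?_⟩
  have hX0 : (0:ℝ) < X := by linarith
  have hX1 : (1:ℝ) ≤ X := by linarith
  have hlog : 1 ≤ Real.log X := by
    rw [Real.le_log_iff_exp_le hX0]
    have := Real.exp_one_lt_d9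
    linarith
  set Δ := X ^ (1 / 4 - c) with hΔdef
  set ε := X ^ (-c) with hεdef
  have hε : 0 < ε := Real.rpow_pos_of_pos hX0 _
  have hΔpos : 0 < Δ := Real.rpow_pos_of_pos hX0 _
  have hεΔ : ε ≤ Δ := Real.rpow_le_rpow_of_exponent_le hX1 (by norm_num)
  have hcont : Continuous fun t => ‖I c X t‖^2 := (I_continuous c X hc0.le).norm.pow 2
  have hint : ∀ p q : ℝ, IntervalIntegrable (fun t => ‖I c X t‖^2) volume p q :=
    fun p q => hcont.intervalIntegrable p q
  have hεinv : ε⁻¹ = X ^ c := by rw [hεdef, Real.rpow_neg hX0.le, inv_inv]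
  have hX22 : X ^ (2 - 2*c) * X ^ c = X ^ (2 - c) := by
    rw [← Real.rpow_add hX0]; congr 1; ring
  -- pointwise tail bound
  have hptw : ∀ t : ℝ, t ≠ 0 → ‖I c X t‖^2 ≤ K^2 * X^(2-2*c) * (t^2)⁻¹ := by
    intro t ht
    have hb : ‖I c X t‖ ≤ 3 * (X/2) ^ (1 - c) / (2 * Real.pi * |t| * c) := by
      simpa only [I] using decay c hc1 (show (0:ℝ) < X/2 by linarith) (by linarith) ht
    have ht0 : 0 < |t| := abs_pos.mpr ht
    have heq : 3 * (X/2) ^ (1 - c) / (2 * Real.pi * |t| * c) = K * X^(1-c) / |t| := by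
      rw [Real.div_rpow hX0.le (by norm_num : (0:ℝ) ≤ 2), hK]
      rw [show (2:ℝ)^(c-1) = ((2:ℝ)^(1-c))⁻¹ by
        rw [← Real.rpow_neg (by norm_num : (0:ℝ) ≤ 2)]; congr 1; ring]
      have h2 : (0:ℝ) < (2:ℝ)^(1-c) := Real.rpow_pos_of_pos two_pos _
      field_simp
    rw [heq] at hb
    have hsq := pow_le_pow_left₀ (norm_nonneg _) hb 2
    refine hsq.trans (le_of_eq ?_)
    rw [div_pow, mul_pow, sq_abs]
    congr 2
    rw [← Real.rpow_natCast (X ^ (1-c)) 2, ← Real.rpow_mul hX0.le]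
    congr 1
    push_cast
    ring
  have hgint : ∀ p q : ℝ, (0:ℝ) ∉ Set.uIcc p q →
      IntervalIntegrable (fun t : ℝ => K^2 * X^(2-2*c) * (t^2)⁻¹) volume p q := by
    intro p q h
    apply ContinuousOn.intervalIntegrable
    apply ContinuousOn.mul continuousOn_const
    apply ContinuousOn.inv₀ (continuous_pow 2).continuousOn
    intro x hx
    exact pow_ne_zero _ (fun h' => h (h' ▸ hx))
  -- positive tail
  have tail_pos : (∫ t in ε..Δ, ‖I c X t‖^2) ≤ K^2 * X^(2-c) := by
    have h0 : (0:ℝ) ∉ Set.uIcc ε Δ := Set.notMem_uIcc_of_lt hε hΔpos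
    have hmono := intervalIntegral.integral_mono_on hεΔ (hint _ _) (hgint _ _ h0)
      (fun t htm => hptw t (by intro h'; rw [h'] at htm; exact absurd htm.1 (by linarith)))
    refine hmono.trans ?_
    rw [intervalIntegral.integral_const_mul, integral_inv_sq' h0]
    calc K^2 * X^(2-2*c) * (ε⁻¹ - Δ⁻¹) ≤ K^2 * X^(2-2*c) * ε⁻¹ := by
          have hΔi : (0:ℝ) < Δ⁻¹ := by positivity
          have hA : (0:ℝ) ≤ K^2 * X^(2-2*c) := by positivity
          nlinarith [mul_nonneg hA hΔi.le]
      _ = K^2 * X^(2-c) := by rw [hεinv, mul_assoc, hX22]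
  -- negative tail
  have tail_neg : (∫ t in (-Δ)..(-ε), ‖I c X t‖^2) ≤ K^2 * X^(2-c) := by
    have h0 : (0:ℝ) ∉ Set.uIcc (-Δ) (-ε) := by
      intro h'
      rw [Set.uIcc_of_le (by linarith)] at h'
      linarith [h'.2]
    have hmono := intervalIntegral.integral_mono_on (by linarith : -Δ ≤ -ε) (hint _ _)
      (hgint _ _ h0)
      (fun t htm => hptw t (by intro h'; rw [h'] at htm; exact absurd htm.2 (by linarith)))
    refine hmono.trans ?_
    rw [intervalIntegral.integral_const_mul, integral_inv_sq' h0]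
    calc K^2 * X^(2-2*c) * ((-Δ)⁻¹ - (-ε)⁻¹) = K^2 * X^(2-2*c) * (ε⁻¹ - Δ⁻¹) := by
          rw [inv_neg, inv_neg]; ring
      _ ≤ K^2 * X^(2-2*c) * ε⁻¹ := by
          have hΔi : (0:ℝ) < Δ⁻¹ := by positivity
          have hA : (0:ℝ) ≤ K^2 * X^(2-2*c) := by positivity
          nlinarith [mul_nonneg hA hΔi.le]
      _ = K^2 * X^(2-c) := by rw [hεinv, mul_assoc, hX22]
  -- middle
  have htriv : ∀ t : ℝ, ‖I c X t‖ ≤ X / 2 := by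
    intro t
    have h := intervalIntegral.norm_integral_le_of_norm_le_const
      (C := 1) (f := fun y : ℝ => e (t * y ^ c)) (a := X/2) (b := X)
      (fun y _ => le_of_eq (norm_e _))
    calc ‖I c X t‖ ≤ 1 * |X - X/2| := h
      _ = X / 2 := by rw [abs_of_nonneg (by linarith), one_mul]; ring
  have hmid : (∫ t in (-ε)..ε, ‖I c X t‖^2) ≤ (1/2) * X^(2-c) := by
    have hmono := intervalIntegral.integral_mono_on (by linarith : -ε ≤ ε) (hint _ _)
      (intervalIntegrable_const (c := (X/2)^2))
      (fun t _ => by nlinarith [htriv t, norm_nonneg (I c X t)])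
    refine hmono.trans (le_of_eq ?_)
    rw [intervalIntegral.integral_const, smul_eq_mul]
    have hX2 : X ^ (2:ℕ) * ε = X ^ (2-c) := by
      rw [hεdef, ← Real.rpow_natCast X 2, ← Real.rpow_add hX0, sub_eq_add_neg]
      norm_num
    calc (ε - -ε) * (X/2)^2 = (1/2) * (X ^ (2:ℕ) * ε) := by ring
      _ = (1/2) * X^(2-c) := by rw [hX2]
  -- combine
  have h1 : (∫ t in (-Δ)..(-ε), ‖I c X t‖^2) + (∫ t in (-ε)..ε, ‖I c X t‖^2)
      = ∫ t in (-Δ)..ε, ‖I c X t‖^2 :=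
    intervalIntegral.integral_add_adjacent_intervals (hint _ _) (hint _ _)
  have h2 : (∫ t in (-Δ)..ε, ‖I c X t‖^2) + (∫ t in ε..Δ, ‖I c X t‖^2)
      = ∫ t in (-Δ)..Δ, ‖I c X t‖^2 :=
    intervalIntegral.integral_add_adjacent_intervals (hint _ _) (hint _ _)
  have hXpow : 0 < X ^ (2-c) := Real.rpow_pos_of_pos hX0 _
  calc (∫ t in (-Δ)..Δ, ‖I c X t‖^2) = (∫ t in (-Δ)..(-ε), ‖I c X t‖^2)
        + (∫ t in (-ε)..ε, ‖I c X t‖^2) + (∫ t in ε..Δ, ‖I c X t‖^2) := by rw [h1, h2]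
    _ ≤ K^2 * X^(2-c) + (1/2) * X^(2-c) + K^2 * X^(2-c) := by
        exact add_le_add (add_le_add tail_neg hmid) tail_pos
    _ = (1/2 + 2*K^2) * X^(2-c) := by ring
    _ ≤ (1/2 + 2*K^2) * X^(2-c) * Real.log X := by
        nlinarith [mul_pos (by positivity : (0:ℝ) < 1/2 + 2*K^2) hXpow]
end

section
/- Let 1 < c < 427/400 be fixed. For S(t) = Σ_{X/2 < p ≤ X} e(t p^c) log p (sum over primes p) and any integer n ≥ 0, one has ∫_{n}^{n+1} |S(t)|² dt ≪ X (log X)³ for all sufficiently large X, with an implied constant depending only on c (uniform in n). -/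
open MeasureTheory

lemma e_add (a b : ℝ) : e (a + b) = e a * e b := by
  rw [e, e, e, ← Complex.exp_add]; congr 1; push_cast; ring

lemma conj_e (a : ℝ) : (starRingEnd ℂ) (e a) = e (-a) := by
  rw [e, e, ← Complex.exp_conj]; congr 1
  simp [Complex.ext_iff]

lemma continuous_e_mul (α : ℝ) (z : ℂ) : Continuous fun t : ℝ => e (t * α) * z := by
  apply Continuous.mul _ continuous_const
  unfold e
  fun_prop

lemma integral_e_bound (α n : ℝ) (hα : α ≠ 0) :
    ‖∫ t in n..(n + 1), e (t * α)‖ ≤ 1 / |α| := by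
  have h : ∀ t : ℝ, e (t * α) = Complex.exp ((2 * Real.pi * Complex.I * α) * t) := by
    intro t; rw [e]; congr 1; push_cast; ring
  have hc : (2 * Real.pi * Complex.I * α : ℂ) ≠ 0 := by
    simp [Complex.ext_iff, Real.pi_ne_zero, hα, Complex.I_ne_zero]
  rw [show (∫ t in n..(n+1), e (t * α)) = ∫ t in n..(n+1),
      Complex.exp ((2 * Real.pi * Complex.I * α) * t) from intervalIntegral.integral_congr
      (fun t _ => h t)]
  rw [integral_exp_mul_complex hc]
  have hnorm : ∀ z : ℂ, z.im = 0 → ‖Complex.exp ((2 * Real.pi * Complex.I * α) * z)‖ = 1 := by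
    intro z hz
    rw [Complex.norm_exp]
    have : ((2 * Real.pi * Complex.I * α : ℂ) * z).re = 0 := by
      simp [Complex.mul_re, hz]
    rw [this, Real.exp_zero]
  rw [norm_div]
  have h2 : ‖Complex.exp ((2*Real.pi*Complex.I*α) * (((n:ℝ)+1:ℝ) : ℂ)) -
      Complex.exp ((2*Real.pi*Complex.I*α) * (n : ℂ))‖ ≤ 2 := by
    refine (norm_sub_le _ _).trans ?_
    rw [hnorm _ (by simp), hnorm _ (by simp)]; norm_num
  have h3 : ‖(2 * Real.pi * Complex.I * α : ℂ)‖ = 2 * Real.pi * |α| := by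
    simp [norm_mul, Complex.norm_real, Real.norm_eq_abs, abs_of_pos Real.pi_pos]
  rw [h3]
  have h2' := h2
  push_cast at h2' ⊢
  rw [div_le_div_iff₀ (by positivity) (by positivity)]
  have hpi : (2:ℝ) ≤ Real.pi := by linarith [Real.pi_gt_three]
  have habs : 0 < |α| := abs_pos.mpr hα
  nlinarith

noncomputable def R (N : ℕ) : ℝ := ∑ i ∈ Finset.range N, 1 / ((i : ℝ) + 1)

lemma R_nonneg (N : ℕ) : 0 ≤ R N :=
  Finset.sum_nonneg fun i _ => by positivity

lemma R_mono {M N : ℕ} (h : M ≤ N) : R M ≤ R N :=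
  Finset.sum_le_sum_of_subset_of_nonneg (Finset.range_subset_range.mpr h) (fun i _ _ => by positivity)

lemma R_le (N : ℕ) : R N ≤ 1 + Real.log N := by
  have := harmonic_le_one_add_log N
  have he : (harmonic N : ℝ) = R N := by
    rw [harmonic, R]; push_cast; simp [one_div]
  linarith

lemma sum_lt_bound (p N : ℕ) (hpN : p < N) :
    ∑ q ∈ (Finset.range N).filter (· < p), 1 / ((p : ℝ) - q) ≤ R N := by
  have hfil : (Finset.range N).filter (· < p) = Finset.range p := by
    ext q
    simp only [Finset.mem_filter, Finset.mem_range]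
    exact ⟨fun h => h.2, fun h => ⟨lt_trans h hpN, h⟩⟩
  rw [hfil]
  have h1 : ∀ q ∈ Finset.range p, 1 / ((p : ℝ) - q) = 1 / (((p - q : ℕ) : ℝ)) := by
    intro q hq
    rw [Nat.cast_sub (le_of_lt (Finset.mem_range.mp hq))]
  rw [Finset.sum_congr rfl h1]
  have h2 : ∑ q ∈ Finset.range p, 1 / (((p - q : ℕ) : ℝ)) = R p := by
    rw [R, ← Finset.sum_range_reflect (fun j => 1 / ((j : ℝ) + 1)) p]
    refine Finset.sum_congr rfl fun q hq => ?_
    have hq' := Finset.mem_range.mp hq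
    have : ((p - 1 - q : ℕ) : ℝ) + 1 = ((p - q : ℕ) : ℝ) := by
      have : p - 1 - q + 1 = p - q := by omega
      rw [← this]; push_cast [Nat.cast_add]; ring
    rw [this]
  rw [h2]
  exact R_mono (le_of_lt hpN)

lemma sum_gt_bound (p N : ℕ) :
    ∑ q ∈ (Finset.range N).filter (fun q => p < q), 1 / ((q : ℝ) - p) ≤ R N := by
  have hsub : (Finset.range N).filter (fun q => p < q) ⊆
      (Finset.range N).image (fun j => p + 1 + j) := by
    intro q hq
    simp only [Finset.mem_filter, Finset.mem_range] at hq
    simp only [Finset.mem_image, Finset.mem_range]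
    exact ⟨q - p - 1, by omega, by omega⟩
  calc ∑ q ∈ (Finset.range N).filter (fun q => p < q), 1 / ((q : ℝ) - p)
      ≤ ∑ q ∈ (Finset.range N).image (fun j => p + 1 + j), 1 / ((q : ℝ) - p) := by
        refine Finset.sum_le_sum_of_subset_of_nonneg hsub fun q hq _ => ?_
        simp only [Finset.mem_image, Finset.mem_range] at hq
        obtain ⟨j, _, rfl⟩ := hq
        have : (0:ℝ) < ((p + 1 + j : ℕ) : ℝ) - p := by push_cast; linarith
        positivity
    _ = ∑ j ∈ Finset.range N, 1 / (((p + 1 + j : ℕ) : ℝ) - p) := by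
        rw [Finset.sum_image]
        intro a _ b _ h; dsimp only at h; omega
    _ = R N := by
        rw [R]; refine Finset.sum_congr rfl fun j _ => ?_
        push_cast; ring_nf

lemma D_le (p N : ℕ) (hpN : p < N) :
    ∑ q ∈ Finset.range N, (if p = q then 0 else 1 / |(p : ℝ) - q|) ≤ 2 * R N := by
  have hsplit : ∀ q ∈ Finset.range N, (if p = q then 0 else 1 / |(p : ℝ) - q|) =
      (if q < p then 1 / ((p : ℝ) - q) else 0) + (if p < q then 1 / ((q : ℝ) - p) else 0) := by
    intro q _
    rcases lt_trichotomy q p with h | h | h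
    · rw [if_pos h, if_neg (by omega), if_neg (by omega)]
      have : (q:ℝ) < p := by exact_mod_cast h
      rw [abs_of_pos (by linarith)]
      ring
    · simp [h]
    · rw [if_pos h, if_neg (by omega), if_neg (by omega)]
      have : (p:ℝ) < q := by exact_mod_cast h
      rw [abs_of_neg (by linarith), neg_sub]; ring
  rw [Finset.sum_congr rfl hsplit, Finset.sum_add_distrib]
  have h1 : ∑ q ∈ Finset.range N, (if q < p then 1 / ((p : ℝ) - q) else 0) ≤ R N := by
    rw [← Finset.sum_filter]; exact sum_lt_bound p N hpN
  have h2 : ∑ q ∈ Finset.range N, (if p < q then 1 / ((q : ℝ) - p) else 0) ≤ R N := by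
    rw [← Finset.sum_filter]; exact sum_gt_bound p N
  linarith

lemma rpow_gap {c : ℝ} (hc : 1 ≤ c) {x y : ℝ} (hy : 1 ≤ y) (hxy : y ≤ x) :
    x - y ≤ x ^ c - y ^ c := by
  have hy0 : 0 < y := by linarith
  have hx0 : 0 < x := by linarith
  have hx' : x ^ c = x ^ (c - 1) * x := by
    rw [← Real.rpow_add_one hx0.ne' (c - 1)]; ring_nf
  have hy' : y ^ c = y ^ (c - 1) * y := by
    rw [← Real.rpow_add_one hy0.ne' (c - 1)]; ring_nf
  have hmono : y ^ (c - 1) ≤ x ^ (c - 1) :=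
    Real.rpow_le_rpow hy0.le hxy (by linarith)
  have hone : 1 ≤ y ^ (c - 1) := Real.one_le_rpow hy (by linarith)
  rw [hx', hy']
  nlinarith

/-- For fixed `1 < c < 427/400` and every integer `n ≥ 0`,
`∫_{n}^{n+1} |S(t)|² dt ≪ X (log X)³` for all sufficiently large `X`, uniformly in `n`. -/
theorem stmt_5 (c : ℝ) (hc1 : 1 < c) (hc2 : c < 427 / 400) :
    ∃ C : ℝ, 0 < C ∧ ∃ X0 : ℝ, ∀ X : ℝ, X0 ≤ X → ∀ n : ℕ,
      (∫ t in (n : ℝ)..((n : ℝ) + 1), ‖S c X t‖ ^ 2) ≤ C * X * Real.log X ^ 3 := by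
  refine ⟨14, by norm_num, 3, ?_⟩
  intro X hX n
  set P := primesIoc (X / 2) X with hPdef
  set N := ⌊X⌋₊ + 1 with hNdef
  have hX0 : (0:ℝ) < X := by linarith
  have hlog1 : 1 ≤ Real.log X := by
    have h3 : Real.exp 1 ≤ 3 := by
      have := Real.exp_one_lt_d9; linarith
    calc (1:ℝ) = Real.log (Real.exp 1) := (Real.log_exp 1).symm
      _ ≤ Real.log X := Real.log_le_log (Real.exp_pos 1) (by linarith)
  have hPsub : P ⊆ Finset.range N := Finset.filter_subset _ _
  have hPfacts : ∀ p ∈ P, p.Prime ∧ X / 2 < (p:ℝ) ∧ (p : ℝ) ≤ X := by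
    intro p hp
    exact (Finset.mem_filter.mp hp).2
  have hlogp : ∀ p ∈ P, 0 ≤ Real.log p ∧ Real.log p ≤ Real.log X := by
    intro p hp
    obtain ⟨hp1, _, hp3⟩ := hPfacts p hp
    have h1p : (1:ℝ) ≤ p := by exact_mod_cast hp1.one_lt.le
    exact ⟨Real.log_nonneg h1p, Real.log_le_log (by linarith) hp3⟩
  -- pointwise expansion
  have hexpand : ∀ t : ℝ, ((‖S c X t‖ ^ 2 : ℝ) : ℂ) =
      ∑ p ∈ P, ∑ q ∈ P,
        e (t * ((p:ℝ) ^ c - (q:ℝ) ^ c)) * ((Real.log p * Real.log q : ℝ) : ℂ) := by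
    intro t
    have h1 : ((‖S c X t‖ ^ 2 : ℝ) : ℂ) = S c X t * (starRingEnd ℂ) (S c X t) := by
      rw [Complex.mul_conj]
      congr 1
      rw [Complex.sq_norm]
    rw [h1, S, ← hPdef, map_sum, Finset.sum_mul_sum]
    refine Finset.sum_congr rfl fun p hp => Finset.sum_congr rfl fun q hq => ?_
    rw [map_mul, conj_e, Complex.conj_ofReal]
    rw [show t * ((p:ℝ) ^ c - (q:ℝ) ^ c) = t * (p:ℝ) ^ c + -(t * (q:ℝ) ^ c) by ring, e_add]
    push_cast
    ring
  -- integral equals real part of sum of integrals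
  have hIeq : (∫ t in (n:ℝ)..((n:ℝ) + 1), ‖S c X t‖ ^ 2) =
      (∑ p ∈ P, ∑ q ∈ P, ∫ t in (n:ℝ)..((n:ℝ) + 1),
        e (t * ((p:ℝ) ^ c - (q:ℝ) ^ c)) * ((Real.log p * Real.log q : ℝ) : ℂ)).re := by
    have h0 : ((∫ t in (n:ℝ)..((n:ℝ) + 1), ‖S c X t‖ ^ 2 : ℝ) : ℂ) =
        ∑ p ∈ P, ∑ q ∈ P, ∫ t in (n:ℝ)..((n:ℝ) + 1),
          e (t * ((p:ℝ) ^ c - (q:ℝ) ^ c)) * ((Real.log p * Real.log q : ℝ) : ℂ) := by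
      rw [← intervalIntegral.integral_ofReal,
        intervalIntegral.integral_congr (fun t _ => hexpand t),
        intervalIntegral.integral_finset_sum (fun p _ =>
          (continuous_finset_sum _ fun q _ => continuous_e_mul _ _).intervalIntegrable _ _)]
      exact Finset.sum_congr rfl fun p _ =>
        intervalIntegral.integral_finset_sum (fun q _ =>
          (continuous_e_mul _ _).intervalIntegrable _ _)
    have := congrArg Complex.re h0
    simpa using this
  rw [hIeq]
  -- per-term bound
  set B : ℕ → ℕ → ℝ := fun p q => if p = q then 1 else 1 / |(p:ℝ) - (q:ℝ)| with hBdef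
  have hterm : ∀ p ∈ P, ∀ q ∈ P,
      ‖∫ t in (n:ℝ)..((n:ℝ) + 1),
        e (t * ((p:ℝ) ^ c - (q:ℝ) ^ c)) * ((Real.log p * Real.log q : ℝ) : ℂ)‖ ≤
      Real.log X ^ 2 * B p q := by
    intro p hp q hq
    rw [intervalIntegral.integral_mul_const, norm_mul]
    have hz : ‖((Real.log p * Real.log q : ℝ) : ℂ)‖ ≤ Real.log X ^ 2 := by
      rw [Complex.norm_real, Real.norm_eq_abs,
        abs_of_nonneg (mul_nonneg (hlogp p hp).1 (hlogp q hq).1)]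
      have := (hlogp p hp); have := (hlogp q hq)
      nlinarith [(hlogp p hp).1, (hlogp p hp).2, (hlogp q hq).1, (hlogp q hq).2]
    by_cases hpq : p = q
    · subst hpq
      have he0 : ∀ t : ℝ, e (t * ((p:ℝ) ^ c - (p:ℝ) ^ c)) = 1 := by
        intro t; rw [sub_self, mul_zero, e]; simp
      rw [intervalIntegral.integral_congr (fun t _ => he0 t),
        intervalIntegral.integral_const]
      simp only [hBdef, if_pos rfl]
      have : ‖((n:ℝ) + 1 - n) • (1:ℂ)‖ = 1 := by norm_num
      rw [this, one_mul]
      calc ‖((Real.log p * Real.log p : ℝ) : ℂ)‖ ≤ Real.log X ^ 2 := hz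
        _ = Real.log X ^ 2 * 1 := by ring
    · -- off diagonal
      have h1p : (1:ℝ) ≤ p := by exact_mod_cast (hPfacts p hp).1.one_lt.le
      have h1q : (1:ℝ) ≤ q := by exact_mod_cast (hPfacts q hq).1.one_lt.le
      have hgap : |(p:ℝ) - q| ≤ |(p:ℝ) ^ c - (q:ℝ) ^ c| := by
        rcases lt_or_gt_of_ne (fun h : (p:ℝ) = q => hpq (by exact_mod_cast h)) with h | h
        · have := rpow_gap hc1.le h1p h.le
          rw [abs_sub_comm, abs_sub_comm ((p:ℝ)^c) _]
          rw [abs_of_nonneg (by linarith), abs_of_nonneg (by linarith)]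
          exact this
        · have := rpow_gap hc1.le h1q h.le
          rw [abs_of_nonneg (by linarith), abs_of_nonneg (by linarith)]
          exact this
      have hpqpos : 0 < |(p:ℝ) - q| := by
        rw [abs_pos, sub_ne_zero]
        exact fun h => hpq (by exact_mod_cast h)
      have hαne : (p:ℝ) ^ c - (q:ℝ) ^ c ≠ 0 := by
        intro h
        rw [h, abs_zero] at hgap
        linarith
      have hI := integral_e_bound ((p:ℝ) ^ c - (q:ℝ) ^ c) n hαne
      have hI2 : ‖∫ t in (n:ℝ)..((n:ℝ) + 1), e (t * ((p:ℝ) ^ c - (q:ℝ) ^ c))‖ ≤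
          1 / |(p:ℝ) - q| := by
        refine hI.trans ?_
        exact one_div_le_one_div_of_le hpqpos hgap
      simp only [hBdef, if_neg hpq]
      calc ‖∫ t in (n:ℝ)..((n:ℝ) + 1), e (t * ((p:ℝ) ^ c - (q:ℝ) ^ c))‖ *
            ‖((Real.log p * Real.log q : ℝ) : ℂ)‖
          ≤ (1 / |(p:ℝ) - q|) * Real.log X ^ 2 := by
            exact mul_le_mul hI2 hz (norm_nonneg _) (by positivity)
        _ = Real.log X ^ 2 * (1 / |(p:ℝ) - q|) := by ring
  -- sum it up
  have hsumB : ∑ p ∈ P, ∑ q ∈ P, B p q ≤ (N : ℝ) * (1 + 2 * R N) := by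
    have hrow : ∀ p ∈ P, ∑ q ∈ P, B p q ≤ 1 + 2 * R N := by
      intro p hp
      have hpN : p < N := Finset.mem_range.mp (hPsub hp)
      have hsplit : ∀ q ∈ P, B p q =
          (if p = q then (1:ℝ) else 0) + (if p = q then 0 else 1 / |(p:ℝ) - q|) := by
        intro q _
        by_cases h : p = q <;> simp [hBdef, h]
      rw [Finset.sum_congr rfl hsplit, Finset.sum_add_distrib]
      have h1 : ∑ q ∈ P, (if p = q then (1:ℝ) else 0) ≤ 1 := by
        rw [Finset.sum_ite_eq]
        split <;> norm_num
      have h2 : ∑ q ∈ P, (if p = q then (0:ℝ) else 1 / |(p:ℝ) - q|) ≤ 2 * R N := by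
        refine le_trans (Finset.sum_le_sum_of_subset_of_nonneg hPsub fun q _ _ => ?_)
          (D_le p N hpN)
        split <;> positivity
      linarith
    calc ∑ p ∈ P, ∑ q ∈ P, B p q ≤ ∑ p ∈ P, (1 + 2 * R N) :=
          Finset.sum_le_sum hrow
      _ = (P.card : ℝ) * (1 + 2 * R N) := by rw [Finset.sum_const, nsmul_eq_mul]
      _ ≤ (N : ℝ) * (1 + 2 * R N) := by
          have hcard : P.card ≤ N := by
            simpa using Finset.card_le_card hPsub
          have : (0:ℝ) ≤ 1 + 2 * R N := by linarith [R_nonneg N]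
          have : (P.card : ℝ) ≤ N := by exact_mod_cast hcard
          nlinarith [R_nonneg N]
  -- numerics
  have hNX : (N : ℝ) ≤ 2 * X := by
    have : (⌊X⌋₊ : ℝ) ≤ X := Nat.floor_le hX0.le
    have : (N : ℝ) = (⌊X⌋₊ : ℝ) + 1 := by push_cast [hNdef]; ring
    linarith [Nat.floor_le hX0.le, this]
  have hlogN : Real.log N ≤ 2 * Real.log X := by
    have hN1 : (1:ℝ) ≤ N := by exact_mod_cast Nat.le_add_left 1 ⌊X⌋₊
    have hNle : (N : ℝ) ≤ X ^ 2 := by nlinarith [Nat.floor_le hX0.le]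
    calc Real.log N ≤ Real.log (X ^ 2) := Real.log_le_log (by linarith) hNle
      _ = 2 * Real.log X := by rw [Real.log_pow]; push_cast; ring
  have hRN : R N ≤ 1 + 2 * Real.log X := by
    linarith [R_le N]
  -- final chain
  calc (∑ p ∈ P, ∑ q ∈ P, ∫ t in (n:ℝ)..((n:ℝ) + 1),
        e (t * ((p:ℝ) ^ c - (q:ℝ) ^ c)) * ((Real.log p * Real.log q : ℝ) : ℂ)).re
      ≤ ‖∑ p ∈ P, ∑ q ∈ P, ∫ t in (n:ℝ)..((n:ℝ) + 1),
        e (t * ((p:ℝ) ^ c - (q:ℝ) ^ c)) * ((Real.log p * Real.log q : ℝ) : ℂ)‖ :=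
        Complex.re_le_norm _
    _ ≤ ∑ p ∈ P, ∑ q ∈ P, ‖∫ t in (n:ℝ)..((n:ℝ) + 1),
        e (t * ((p:ℝ) ^ c - (q:ℝ) ^ c)) * ((Real.log p * Real.log q : ℝ) : ℂ)‖ := by
        refine (norm_sum_le _ _).trans (Finset.sum_le_sum fun p _ => norm_sum_le _ _)
    _ ≤ ∑ p ∈ P, ∑ q ∈ P, Real.log X ^ 2 * B p q :=
        Finset.sum_le_sum fun p hp => Finset.sum_le_sum fun q hq => hterm p hp q hq
    _ = Real.log X ^ 2 * ∑ p ∈ P, ∑ q ∈ P, B p q := by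
        rw [Finset.mul_sum]
        exact Finset.sum_congr rfl fun p _ => by rw [Finset.mul_sum]
    _ ≤ Real.log X ^ 2 * ((N : ℝ) * (1 + 2 * R N)) := by
        have h0 : (0:ℝ) ≤ Real.log X ^ 2 := by positivity
        exact mul_le_mul_of_nonneg_left hsumB h0
    _ ≤ 14 * X * Real.log X ^ 3 := by
        have h1 : 1 + 2 * R N ≤ 7 * Real.log X := by linarith
        have h2 : (N : ℝ) * (1 + 2 * R N) ≤ (2 * X) * (7 * Real.log X) :=
          mul_le_mul hNX h1 (by linarith [R_nonneg N]) (by linarith)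
        calc Real.log X ^ 2 * ((N : ℝ) * (1 + 2 * R N))
            ≤ Real.log X ^ 2 * ((2 * X) * (7 * Real.log X)) :=
              mul_le_mul_of_nonneg_left h2 (by positivity)
          _ = 14 * X * Real.log X ^ 3 := by ring
end
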